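/- If the admissible ideal I on ℕ satisfies the condition (AP), then for every sequence (x_n) in a normed linear space and every r ≥ 0, the rough I-limit set of degree r equals the rough I*-limit set of degree r. -/

import Mathlib

/-- `I` is an ideal of subsets of ℕ: closed under finite unions and subsets. -/
def IsIdeal (I : Set (Set ℕ)) : Prop :=
  (∀ A B : Set ℕ, A ∈ I → B ∈ I → A ∪ B ∈ I) ∧
  (∀ A B : Set ℕ, A ∈ I → B ⊆ A → B ∈ I)

/-- A nontrivial admissible ideal: an ideal containing all singletons, with ℕ ∉ I. -/
def IsAdmissibleIdeal (I : Set (Set ℕ)) : Prop :=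
  IsIdeal I ∧ (∀ n : ℕ, ({n} : Set ℕ) ∈ I) ∧ (Set.univ : Set ℕ) ∉ I

/-- The subsequence of `x` over `M` rough converges to `l` of degree `r`:
for each ε > 0, ‖x m − l‖ < r + ε for all but finitely many m ∈ M. -/
def RoughConvAlong {X : Type*} [NormedAddCommGroup X]
    (M : Set ℕ) (x : ℕ → X) (r : ℝ) (l : X) : Prop :=
  ∀ ε > (0:ℝ), {m ∈ M | r + ε ≤ ‖x m - l‖}.Finite

/-- Rough I-convergence of degree r to l. -/
def RoughIConv (I : Set (Set ℕ)) {X : Type*} [NormedAddCommGroup X]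
    (x : ℕ → X) (r : ℝ) (l : X) : Prop :=
  ∀ ε > (0:ℝ), {n : ℕ | r + ε ≤ ‖x n - l‖} ∈ I

/-- Rough I*-convergence of degree r to l. -/
def RoughIStarConv (I : Set (Set ℕ)) {X : Type*} [NormedAddCommGroup X]
    (x : ℕ → X) (r : ℝ) (l : X) : Prop :=
  ∃ M : Set ℕ, Mᶜ ∈ I ∧ RoughConvAlong M x r l

/-- The trace ideal K|M = {A ∩ M : A ∈ K}. -/
def traceIdeal (K : Set (Set ℕ)) (M : Set ℕ) : Set (Set ℕ) :=
  {A | ∃ B ∈ K, A = B ∩ M}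

/-- Rough I^K-convergence of degree r to l: there is M with Mᶜ ∈ I such that the
set of indices of the subsequence over M lying outside the (r+ε)-ball belongs to K|M. -/
def RoughIKConv (I K : Set (Set ℕ)) {X : Type*} [NormedAddCommGroup X]
    (x : ℕ → X) (r : ℝ) (l : X) : Prop :=
  ∃ M : Set ℕ, Mᶜ ∈ I ∧
    ∀ ε > (0:ℝ), {m ∈ M | r + ε ≤ ‖x m - l‖} ∈ traceIdeal K M

/-- The condition (AP) for an ideal I. -/
def APcond (I : Set (Set ℕ)) : Prop :=
  ∀ A : ℕ → Set ℕ, (∀ j, A j ∈ I) → (Pairwise (Function.onFun Disjoint A)) →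
    ∃ B : ℕ → Set ℕ, (∀ j, B j ∈ I) ∧ (∀ j, (symmDiff (A j) (B j)).Finite) ∧
      (⋃ j, B j) ∈ I

/-- The condition AP(I,K). -/
def APIK (I K : Set (Set ℕ)) : Prop :=
  ∀ A : ℕ → Set ℕ, (∀ j, A j ∈ I) → (Pairwise (Function.onFun Disjoint A)) →
    ∃ B : ℕ → Set ℕ, (∀ j, B j ∈ I) ∧ (∀ j, symmDiff (A j) (B j) ∈ K) ∧
      (⋃ j, B j) ∈ I


lemma finite_mem_of_admissible {I : Set (Set ℕ)} (hI : IsAdmissibleIdeal I)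
    {A : Set ℕ} (h : A.Finite) : A ∈ I := by
  obtain ⟨⟨hunion, hsub⟩, hsing, -⟩ := hI
  refine Set.Finite.induction_on (motive := fun s _ => s ∈ I) _ h (hsub {0} ∅ (hsing 0) (Set.empty_subset _)) ?_
  intro a s _ _ ih
  rw [Set.insert_eq]
  exact hunion _ _ (hsing a) ih

theorem stmt2 {X : Type*} [NormedAddCommGroup X] [NormedSpace ℝ X]
    (I : Set (Set ℕ)) (hI : IsAdmissibleIdeal I) (hAP : APcond I)
    (x : ℕ → X) (r : ℝ) (hr : 0 ≤ r) :
    {l : X | RoughIConv I x r l} = {l : X | RoughIStarConv I x r l} := by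
  ext l
  simp only [Set.mem_setOf_eq]
  constructor
  · -- I ⇒ I*
    intro h
    set A : ℕ → Set ℕ := fun j => {n | r + 1/(j+1) ≤ ‖x n - l‖} with hA
    have hAmem : ∀ j, A j ∈ I := fun j => h (1/(j+1)) (by positivity)
    have hAmono : Monotone A := by
      intro i j hij n hn
      simp only [hA, Set.mem_setOf_eq] at hn ⊢
      have h1 : (1:ℝ)/(j+1) ≤ 1/(i+1) := by
        apply one_div_le_one_div_of_le
        · positivity
        · exact_mod_cast Nat.succ_le_succ hij
      linarith
    set D := disjointed A with hD
    have hDmem : ∀ j, D j ∈ I := fun j =>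
      hI.1.2 _ _ (hAmem j) (disjointed_le A j)
    obtain ⟨B, hBmem, hBfin, hBU⟩ := hAP D hDmem (disjoint_disjointed A)
    refine ⟨(⋃ j, B j)ᶜ, by rwa [compl_compl], ?_⟩
    intro ε hε
    obtain ⟨j, hj⟩ := exists_nat_one_div_lt hε
    have hsub : {m ∈ (⋃ j, B j)ᶜ | r + ε ≤ ‖x m - l‖} ⊆
        ⋃ i ∈ Finset.range (j+1), (D i \ B i) := by
      rintro m ⟨hm, hnorm⟩
      have hmA : m ∈ A j := by
        simp only [hA, Set.mem_setOf_eq]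
        have h2 : (1:ℝ)/(j+1) < ε := by exact_mod_cast hj
        linarith
      have hAeq : A j = ⨆ i ≤ j, D i := by
        have h1 : partialSups A j = A j := congrFun hAmono.partialSups_eq j
        have h2 : partialSups D j = partialSups A j := by
          rw [hD, partialSups_disjointed]
        rw [← h1, ← h2, partialSups_eq_biSup]
      rw [hAeq] at hmA
      simp only [Set.iSup_eq_iUnion, Set.mem_iUnion] at hmA
      obtain ⟨i, hij, hmi⟩ := hmA
      simp only [Set.mem_iUnion, Finset.mem_range]
      refine ⟨i, Nat.lt_succ_of_le hij, hmi, ?_⟩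
      intro hmB
      exact hm (Set.mem_iUnion.mpr ⟨i, hmB⟩)
    refine Set.Finite.subset ?_ hsub
    apply Set.Finite.biUnion (Finset.range (j+1)).finite_toSet
    intro i _
    refine (hBfin i).subset ?_
    intro m hm
    rw [Set.mem_symmDiff]
    exact Or.inl hm
  · -- I* ⇒ I
    rintro ⟨M, hM, hconv⟩
    intro ε hε
    have hsub : {n : ℕ | r + ε ≤ ‖x n - l‖} ⊆ Mᶜ ∪ {m ∈ M | r + ε ≤ ‖x m - l‖} := by
      intro n hn
      by_cases hnM : n ∈ M
      · exact Or.inr ⟨hnM, hn⟩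
      · exact Or.inl hnM
    exact hI.1.2 _ _ (hI.1.1 _ _ hM (finite_mem_of_admissible hI (hconv ε hε))) hsub
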